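/- For every n ≥ 1, the Coxeter group of type A_n — the presented group with generators s_1, …, s_n and relations s_i² = 1, (s_i s_{i+1})³ = 1, and (s_i s_j)² = 1 for |i − j| ≥ 2 (in Lean, the group attached to the Coxeter matrix Aₙ) — is isomorphic to the symmetric group S_{n+1} = Equiv.Perm (Fin (n+1)). -/

import Mathlib

open Equiv

lemma swap_braid {α : Type*} [DecidableEq α] {a b c : α} (hab : a ≠ b) (hbc : b ≠ c)
    (hac : a ≠ c) : (swap a b * swap b c) ^ 3 = 1 := by
  have key : ∀ x, (swap a b * swap b c) ((swap a b * swap b c) ((swap a b * swap b c) x)) = x := by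
    intro x
    rcases eq_or_ne x a with rfl | hxa
    · simp [swap_apply_of_ne_of_ne, hab, hbc, hac, hab.symm, hbc.symm, hac.symm]
    rcases eq_or_ne x b with rfl | hxb
    · simp [swap_apply_of_ne_of_ne, hab, hbc, hac, hab.symm, hbc.symm, hac.symm]
    rcases eq_or_ne x c with rfl | hxc
    · simp [swap_apply_of_ne_of_ne, hab, hbc, hac, hab.symm, hbc.symm, hac.symm]
    · simp [swap_apply_of_ne_of_ne, hxa, hxb, hxc]
  ext x
  simpa [pow_succ, mul_assoc] using key x

lemma swap_comm' {α : Type*} [DecidableEq α] {a b c d : α} (h1 : a ≠ c) (h2 : a ≠ d)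
    (h3 : b ≠ c) (h4 : b ≠ d) : Commute (swap a b) (swap c d) := by
  apply Equiv.ext
  intro x
  simp only [Perm.mul_apply]
  rcases eq_or_ne x a with rfl | hxa
  · simp [swap_apply_of_ne_of_ne, h1, h2, h3, h4]
  rcases eq_or_ne x b with rfl | hxb
  · simp [swap_apply_of_ne_of_ne, h1, h2, h3, h4]
  rcases eq_or_ne x c with rfl | hxc
  · simp [swap_apply_of_ne_of_ne, h1.symm, h2.symm, h3.symm, h4.symm, hxa, hxb]
  rcases eq_or_ne x d with rfl | hxd
  · simp [swap_apply_of_ne_of_ne, h1.symm, h2.symm, h3.symm, h4.symm, hxa, hxb]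
  · simp [swap_apply_of_ne_of_ne, hxa, hxb, hxc, hxd]

lemma An_apply (n : ℕ) (i j : Fin n) :
    (CoxeterMatrix.Aₙ n) i j = if (i:ℕ) = j then 1 else if (j:ℕ)+1 = i ∨ (i:ℕ)+1 = j then 3 else 2 := by
  show (if i = j then 1 else if (j:ℕ)+1 = i ∨ (i:ℕ)+1 = j then 3 else 2) = _
  simp [Fin.ext_iff]

lemma liftable_swap (n : ℕ) :
    (CoxeterMatrix.Aₙ n).IsLiftable (fun i : Fin n => swap i.castSucc i.succ) := by
  intro i j
  rw [An_apply]
  have hne : ∀ k : Fin n, (k.castSucc : Fin (n+1)) ≠ k.succ := by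
    intro k; simp [Fin.ext_iff]
  rcases eq_or_ne (i : ℕ) (j : ℕ) with h | h
  · have : i = j := Fin.ext h
    subst this
    simp [swap_mul_self]
  rcases eq_or_ne ((j : ℕ) + 1) (i : ℕ) with h1 | h1
  · -- j + 1 = i : adjacent, j.succ = i.castSucc
    have hji : (j.succ : Fin (n+1)) = i.castSucc := by simp [Fin.ext_iff, h1]
    rw [if_neg h, if_pos (Or.inl h1)]
    rw [show (swap i.castSucc i.succ * swap j.castSucc j.succ) =
      (swap j.succ i.succ * swap j.castSucc j.succ) from by rw [hji], swap_comm j.succ i.succ,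
      swap_comm j.castSucc j.succ]
    exact swap_braid (by simp only [Fin.ext_iff, Fin.val_succ, Fin.coe_castSucc, ne_eq]; omega)
      (by simp only [Fin.ext_iff, Fin.val_succ, Fin.coe_castSucc, ne_eq]; omega)
      (by simp only [Fin.ext_iff, Fin.val_succ, Fin.coe_castSucc, ne_eq]; omega)
  rcases eq_or_ne ((i : ℕ) + 1) (j : ℕ) with h2 | h2
  · have hij : (i.succ : Fin (n+1)) = j.castSucc := by simp [Fin.ext_iff, h2]
    rw [if_neg h, if_pos (Or.inr h2)]
    show (swap i.castSucc i.succ * swap j.castSucc j.succ) ^ 3 = 1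
    rw [← hij]
    exact swap_braid (by simp only [Fin.ext_iff, Fin.val_succ, Fin.coe_castSucc, ne_eq]; omega)
      (by simp only [Fin.ext_iff, Fin.val_succ, Fin.coe_castSucc, ne_eq]; omega)
      (by simp only [Fin.ext_iff, Fin.val_succ, Fin.coe_castSucc, ne_eq]; omega)
  · rw [if_neg h, if_neg (by tauto)]
    have hc : Commute (swap i.castSucc i.succ) (swap j.castSucc j.succ) :=
      swap_comm' (by simp only [Fin.ext_iff, Fin.val_succ, Fin.coe_castSucc, ne_eq]; omega)
        (by simp only [Fin.ext_iff, Fin.val_succ, Fin.coe_castSucc, ne_eq]; omega)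
        (by simp only [Fin.ext_iff, Fin.val_succ, Fin.coe_castSucc, ne_eq]; omega)
        (by simp only [Fin.ext_iff, Fin.val_succ, Fin.coe_castSucc, ne_eq]; omega)
    rw [sq, mul_assoc, ← mul_assoc (swap j.castSucc j.succ), ← hc.eq]
    simp [mul_assoc, swap_mul_self]

open CoxeterMatrix in
noncomputable def permHom (n : ℕ) : (Aₙ n).Group →* Perm (Fin (n+1)) :=
  (Aₙ n).toCoxeterSystem.lift ⟨fun i : Fin n => swap i.castSucc i.succ, liftable_swap n⟩

open CoxeterMatrix in
lemma permHom_simple (n : ℕ) (i : Fin n) :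
    permHom n ((Aₙ n).simple i) = swap i.castSucc i.succ := by
  have := (Aₙ n).toCoxeterSystem.lift_apply_simple (liftable_swap n) i
  simpa [permHom] using this

open CoxeterMatrix in
lemma permHom_surjective (n : ℕ) : Function.Surjective (permHom n) := by
  intro σ
  have h1 : σ ∈ Submonoid.closure (Set.range fun i : Fin n => swap i.castSucc i.succ) := by
    rw [Equiv.Perm.mclosure_swap_castSucc_succ]; trivial
  have h2 : Submonoid.closure (Set.range fun i : Fin n => swap i.castSucc i.succ)
      ≤ MonoidHom.mrange (permHom n) := by
    rw [Submonoid.closure_le]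
    rintro _ ⟨i, rfl⟩
    exact ⟨(Aₙ n).simple i, permHom_simple n i⟩
  obtain ⟨w, hw⟩ := h2 h1
  exact ⟨w, hw⟩

open CoxeterMatrix

lemma comm_of_sq {G : Type*} [Group G] {x y : G} (hx : x * x = 1) (hy : y * y = 1)
    (h : (x * y) ^ 2 = 1) : Commute x y := by
  have hx' : x⁻¹ = x := inv_eq_of_mul_eq_one_right hx
  have hy' : y⁻¹ = y := inv_eq_of_mul_eq_one_right hy
  have : (x * y)⁻¹ = x * y := inv_eq_of_mul_eq_one_right (by rw [← sq]; exact h)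
  unfold Commute SemiconjBy
  calc x * y = (x * y)⁻¹ := this.symm
  _ = y⁻¹ * x⁻¹ := mul_inv_rev x y
  _ = y * x := by rw [hx', hy']

lemma braid_of_cube {G : Type*} [Group G] {x y : G} (hx : x * x = 1) (hy : y * y = 1)
    (h : (x * y) ^ 3 = 1) : x * y * x = y * x * y := by
  have hx' : x⁻¹ = x := inv_eq_of_mul_eq_one_right hx
  have hy' : y⁻¹ = y := inv_eq_of_mul_eq_one_right hy
  have key : (x * y * x) * (y * x * y) = 1 := by
    have : (x*y)^3 = (x*y*x) * (y*x*y) := by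
      simp only [pow_succ, pow_zero, one_mul, mul_assoc]
    rw [← this]; exact h
  calc x * y * x = (y * x * y)⁻¹ := eq_inv_of_mul_eq_one_left key
  _ = y * x * y := by rw [mul_inv_rev, mul_inv_rev, hx', hy']; rw [mul_assoc]

/-- `sN n m` is the `m`-th simple reflection in the type Aₙ Coxeter group (1 if out of range). -/
def sN (n m : ℕ) : (Aₙ n).Group :=
  if h : m < n then (Aₙ n).simple ⟨m, h⟩ else 1

lemma sN_mul_self (n m : ℕ) : sN n m * sN n m = 1 := by
  unfold sN
  split_ifs with h
  · simpa using (Aₙ n).toCoxeterSystem.simple_mul_simple_self ⟨m, h⟩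
  · simp

lemma sN_pow (n a b : ℕ) (ha : a < n) (hb : b < n) :
    (sN n a * sN n b) ^ ((Aₙ n) ⟨a, ha⟩ ⟨b, hb⟩) = 1 := by
  unfold sN
  rw [dif_pos ha, dif_pos hb]
  simpa using (Aₙ n).toCoxeterSystem.simple_mul_simple_pow ⟨a, ha⟩ ⟨b, hb⟩

lemma sN_comm (n : ℕ) {a b : ℕ} (h : a + 2 ≤ b) : Commute (sN n a) (sN n b) := by
  by_cases hb : b < n
  · have ha : a < n := by omega
    have key := sN_pow n a b ha hb
    rw [An_apply] at key
    rw [if_neg (by simp; omega), if_neg (by simp; omega)] at key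
    exact comm_of_sq (sN_mul_self n a) (sN_mul_self n b) key
  · rw [show sN n b = 1 from dif_neg hb]
    exact Commute.one_right _

lemma sN_braid (n : ℕ) {a : ℕ} (h : a + 1 < n) :
    sN n a * sN n (a+1) * sN n a = sN n (a+1) * sN n a * sN n (a+1) := by
  have ha : a < n := by omega
  have key := sN_pow n a (a+1) ha h
  rw [An_apply] at key
  rw [if_neg (by simp), if_pos (by simp)] at key
  exact braid_of_cube (sN_mul_self n a) (sN_mul_self n (a+1)) key

/-- `dP n m = sN (n-1) * sN (n-2) * ⋯ * sN m` (and `1` if `m ≥ n`). -/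
def dP (n m : ℕ) : (Aₙ n).Group :=
  ((List.range (n - m)).map (fun i => sN n (n - 1 - i))).prod

lemma dP_of_ge (n m : ℕ) (h : n ≤ m) : dP n m = 1 := by
  unfold dP
  rw [Nat.sub_eq_zero_of_le h]
  simp

lemma dP_step (n m : ℕ) (h : m < n) : dP n m = dP n (m+1) * sN n m := by
  unfold dP
  rw [show n - m = (n - (m+1)) + 1 from by omega, List.range_succ, List.map_append,
    List.prod_append]
  simp only [List.map_cons, List.map_nil, List.prod_cons, List.prod_nil, mul_one]
  congr 2
  omega

lemma dP_comm (n : ℕ) : ∀ (k a m : ℕ), n - m ≤ k → a + 2 ≤ m → Commute (sN n a) (dP n m) := by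
  intro k
  induction k with
  | zero =>
    intro a m hk _
    rw [dP_of_ge n m (by omega)]
    exact Commute.one_right _
  | succ k ih =>
    intro a m hk ham
    by_cases hm : m < n
    · rw [dP_step n m hm]
      exact ((ih a (m+1) (by omega) (by omega)).mul_right (sN_comm n ham)).symm.symm
    · rw [dP_of_ge n m (by omega)]
      exact Commute.one_right _

lemma dP_push (n : ℕ) : ∀ (k m j : ℕ), n - m ≤ k → m + 1 ≤ j → j + 1 ≤ n →
    dP n m * sN n j = sN n (j-1) * dP n m := by
  intro k
  induction k with
  | zero => intro m j hk hmj hjn; omega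
  | succ k ih =>
    intro m j hk hmj hjn
    have hm : m < n := by omega
    rcases eq_or_lt_of_le hmj with hj | hj
    · -- j = m + 1 : braid case
      subst hj
      have hm1 : m + 1 < n := by omega
      rw [dP_step n m hm, dP_step n (m+1) hm1]
      have braid := sN_braid n hm1
      have hcomm : Commute (sN n m) (dP n (m+2)) := dP_comm n (n - (m+2)) m (m+2) le_rfl le_rfl
      calc dP n (m+2) * sN n (m+1) * sN n m * sN n (m+1)
          = dP n (m+2) * (sN n (m+1) * sN n m * sN n (m+1)) := by
            simp only [mul_assoc]
        _ = dP n (m+2) * (sN n m * sN n (m+1) * sN n m) := by rw [← braid]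
        _ = sN n m * dP n (m+2) * sN n (m+1) * sN n m := by
            simp only [← mul_assoc]; rw [← hcomm.eq]
        _ = sN n (m+1-1) * (dP n (m+2) * sN n (m+1) * sN n m) := by
            simp only [Nat.add_sub_cancel, mul_assoc]
    · -- j ≥ m + 2
      rw [dP_step n m hm]
      have hcomm : Commute (sN n m) (sN n j) := sN_comm n (by omega)
      calc dP n (m+1) * sN n m * sN n j
          = dP n (m+1) * sN n j * sN n m := by
            simp only [mul_assoc]; rw [hcomm.eq]
        _ = sN n (j-1) * dP n (m+1) * sN n m := by
            rw [ih (m+1) j (by omega) (by omega) hjn]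
        _ = sN n (j-1) * (dP n (m+1) * sN n m) := by rw [mul_assoc]

lemma An_castSucc (n : ℕ) (i j : Fin n) :
    (Aₙ (n+1)) i.castSucc j.castSucc = (Aₙ n) i j := by
  rw [An_apply, An_apply]
  simp

lemma liftable_castSucc (n : ℕ) :
    (Aₙ n).IsLiftable (fun i : Fin n => (Aₙ (n+1)).simple i.castSucc) := by
  intro i j
  rw [← An_castSucc n i j]
  simpa using (Aₙ (n+1)).toCoxeterSystem.simple_mul_simple_pow i.castSucc j.castSucc

/-- The parabolic embedding homomorphism (not yet known injective). -/
noncomputable def parab (n : ℕ) : (Aₙ n).Group →* (Aₙ (n+1)).Group :=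
  (Aₙ n).toCoxeterSystem.lift ⟨fun i : Fin n => (Aₙ (n+1)).simple i.castSucc, liftable_castSucc n⟩

lemma parab_simple (n : ℕ) (i : Fin n) :
    parab n ((Aₙ n).simple i) = (Aₙ (n+1)).simple i.castSucc := by
  simpa [parab] using
    (Aₙ n).toCoxeterSystem.lift_apply_simple (liftable_castSucc n) i

lemma sN_mem_parab_range (n : ℕ) {j : ℕ} (hj : j < n) :
    sN (n+1) j ∈ (parab n).range := by
  refine ⟨(Aₙ n).simple ⟨j, hj⟩, ?_⟩
  rw [parab_simple]
  unfold sN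
  rw [dif_pos (by omega : j < n+1)]
  rfl

lemma card_An : ∀ n : ℕ, Finite ((Aₙ n).Group) ∧ Nat.card ((Aₙ n).Group) ≤ Nat.factorial (n+1) := by
  intro n
  induction n with
  | zero =>
    have htriv : ∀ w : (Aₙ 0).Group, w = 1 := by
      intro w
      refine (Aₙ 0).toCoxeterSystem.simple_induction (p := fun w => w = 1) w (fun i => i.elim0) rfl ?_
      rintro a b rfl rfl; rw [mul_one]
    have : Subsingleton ((Aₙ 0).Group) := ⟨fun a b => by rw [htriv a, htriv b]⟩
    refine ⟨Finite.of_subsingleton, ?_⟩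
    simpa using Nat.card_le_card_of_injective (fun _ : (Aₙ 0).Group => (() : Unit))
      (fun a b _ => by rw [htriv a, htriv b])
  | succ n ih =>
    obtain ⟨hfin, hcard⟩ := ih
    set N := n + 1 with hN
    -- the range of the parabolic map is finite of card ≤ Nat.factorial (n+1)
    have hfinH : Finite ((parab n).range) := by
      have : Finite (Set.range (parab n)) := Set.finite_range (parab n)
      exact this
    have hcardH : Nat.card ((parab n).range) ≤ Nat.factorial (n+1) := by
      refine le_trans (Nat.card_le_card_of_surjective (parab n).rangeRestrict ?_) hcard
      exact MonoidHom.rangeRestrict_surjective _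
    -- every element is in a coset H * dP N m
    have hcover : ∀ g : (Aₙ N).Group,
        ∃ h ∈ (parab n).range, ∃ m ≤ N, g = h * dP N m := by
      intro g
      refine (Aₙ N).toCoxeterSystem.simple_induction_right
        (p := fun g => ∃ h ∈ (parab n).range, ∃ m ≤ N, g = h * dP N m) g ?_ ?_
      · exact ⟨1, one_mem _, N, le_rfl, by rw [dP_of_ge N N le_rfl, one_mul]⟩
      · rintro w i ⟨h, hh, m, hm, rfl⟩
        have hi : (i : ℕ) < N := i.isLt
        have hsimple : (Aₙ N).toCoxeterSystem.simple i = sN N i := by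
          unfold sN
          rw [dif_pos hi]
          simp
        rw [hsimple, mul_assoc]
        set j := (i : ℕ) with hj
        rcases lt_or_ge (j+2) (m+1) with hcase | hcase
        · -- j + 2 ≤ m : commutes, absorb into H
          have hcomm := dP_comm N (N - m) j m le_rfl (by omega)
          rw [← hcomm.eq, ← mul_assoc]
          exact ⟨h * sN N j, mul_mem hh (sN_mem_parab_range n (by omega)), m, hm, rfl⟩
        rcases eq_or_lt_of_le hcase with hcase2 | hcase2
        · -- j + 1 = m : extend the coset rep downward
          have hm' : m = j + 1 := by omega
          subst hm'
          rw [← dP_step N j (by omega)]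
          exact ⟨h, hh, j, by omega, rfl⟩
        rcases eq_or_lt_of_le (Nat.le_of_lt_succ hcase2) with hcase3 | hcase3
        · -- j = m : cancel
          have hjm : j = m := by omega
          subst hjm
          rw [dP_step N j (by omega), mul_assoc, sN_mul_self, mul_one]
          exact ⟨h, hh, j+1, by omega, rfl⟩
        · -- j ≥ m + 1 : push through
          rw [dP_push N (N - m) m j le_rfl (by omega) (by omega), ← mul_assoc]
          exact ⟨h * sN N (j-1), mul_mem hh (sN_mem_parab_range n (by omega)), m, hm, rfl⟩
    -- surjection from H × Fin (N+1)
    have hsurj : Function.Surjective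
        (fun p : (parab n).range × Fin (N+1) => (p.1 : (Aₙ N).Group) * dP N p.2) := by
      intro g
      obtain ⟨h, hh, m, hm, rfl⟩ := hcover g
      exact ⟨(⟨h, hh⟩, ⟨m, by omega⟩), rfl⟩
    have hfinG : Finite ((Aₙ N).Group) := Finite.of_surjective _ hsurj
    refine ⟨hfinG, ?_⟩
    calc Nat.card ((Aₙ N).Group) ≤ Nat.card ((parab n).range × Fin (N+1)) :=
          Nat.card_le_card_of_surjective _ hsurj
    _ = Nat.card ((parab n).range) * (N+1) := by
          rw [Nat.card_prod]; simp
    _ ≤ Nat.factorial (n+1) * (N+1) := Nat.mul_le_mul_right _ hcardH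
    _ = Nat.factorial (N+1) := by rw [hN, Nat.factorial_succ (n+1), mul_comm]


/-- The Coxeter group of type `Aₙ` (the group presented by generators `s₁, …, sₙ` and
relations `sᵢ² = 1`, `(sᵢsᵢ₊₁)³ = 1` and `(sᵢsⱼ)² = 1` for `|i - j| ≥ 2`) is isomorphic
to the symmetric group `S_{n+1}`. -/
theorem coxeterGroup_Aₙ_iso_symmetricGroup (n : ℕ) (hn : 1 ≤ n) :
    Nonempty ((CoxeterMatrix.Aₙ n).Group ≃* Equiv.Perm (Fin (n + 1))) := by
  obtain ⟨hfin, hcard⟩ := card_An n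
  have hsurj := permHom_surjective n
  have hcardPerm : Nat.card (Perm (Fin (n+1))) = Nat.factorial (n+1) := by
    rw [Nat.card_eq_fintype_card, Fintype.card_perm, Fintype.card_fin]
  have hbij : Function.Bijective (permHom n) :=
    hsurj.bijective_of_nat_card_le (by rw [hcardPerm]; exact hcard)
  exact ⟨MulEquiv.ofBijective (permHom n) hbij⟩
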